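/- Let n and m be non-negative integers with n ≥ m, and let T_k(x) = x + x^q + ... + x^{q^{k-1}} denote the trace polynomial over F_q. Define S_{m,n}(x,y) = 0 if m = 0, and S_{m,n}(x,y) = Σ_{i=0}^{m-1} y^{q^{n-1-i}} T_{m-i}(x) if m > 0. Then in F_q[x,y], S^q − S = y^{q^n} T_{m+1}(x) − x T_{m+1}(y^{q^{n-m}}). -/

import Mathlib

/-- The "trace polynomial" operator: `T_k(a) = a + a^q + ⋯ + a^{q^{k-1}}`. -/
def traceImg (q k : ℕ) {R : Type*} [CommRing R] (a : R) : R :=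
  ∑ j ∈ Finset.range k, a ^ q ^ j

/-- `S_{m,n}(x,y)`: `0` if `m = 0`, and `∑_{i=0}^{m-1} y^{q^{n-1-i}} T_{m-i}(x)` otherwise. -/
def SPoly (q m n : ℕ) {R : Type*} [CommRing R] (x y : R) : R :=
  if m = 0 then 0 else ∑ i ∈ Finset.range m, y ^ q ^ (n - 1 - i) * traceImg q (m - i) x

lemma SPoly_succ (q m n : ℕ) {R : Type*} [CommRing R] (x y : R) :
    SPoly q (m + 1) n x y
      = y ^ q ^ (n - 1) * traceImg q (m + 1) x + SPoly q m (n - 1) x y := by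
  simp only [SPoly, Nat.succ_ne_zero, if_false]
  rw [Finset.sum_range_succ']
  rcases Nat.eq_zero_or_pos m with hm | hm
  · simp [hm]
  · rw [if_neg hm.ne', add_comm]
    congr 1
    apply Finset.sum_congr rfl
    intro i _
    rw [show n - 1 - (i + 1) = n - 1 - 1 - i by omega,
      show m + 1 - (i + 1) = m - i by omega]

lemma traceImg_pow_q {R : Type*} [CommRing R] (p : ℕ) [hp : Fact p.Prime] [CharP R p]
    (e k : ℕ) (a : R) :
    (traceImg (p ^ e) k a) ^ p ^ e = traceImg (p ^ e) (k + 1) a - a := by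
  have h : (traceImg (p ^ e) k a) ^ p ^ e
      = iterateFrobenius R p e (traceImg (p ^ e) k a) := by
    rw [iterateFrobenius_def]
  rw [h, traceImg, map_sum]
  have h2 : ∀ j : ℕ, iterateFrobenius R p e (a ^ (p ^ e) ^ j) = a ^ (p ^ e) ^ (j + 1) := by
    intro j
    rw [iterateFrobenius_def, ← pow_mul, ← pow_succ]
  simp only [h2]
  rw [traceImg, Finset.sum_range_succ', pow_zero, pow_one, add_sub_cancel_right]

/-- in `𝔽_q[x,y]`,
`S^q − S = y^{q^n} T_{m+1}(x) − x T_{m+1}(y^{q^{n-m}})`. -/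
theorem stmt_1 (p e : ℕ) [Fact p.Prime] (he : 0 < e) (q : ℕ) (hq : q = p ^ e)
    (m n : ℕ) (hmn : m ≤ n) :
    (SPoly q m n (MvPolynomial.X 0) (MvPolynomial.X 1) : MvPolynomial (Fin 2) (GaloisField p e)) ^ q
        - SPoly q m n (MvPolynomial.X 0) (MvPolynomial.X 1)
      = (MvPolynomial.X 1 : MvPolynomial (Fin 2) (GaloisField p e)) ^ q ^ n
            * traceImg q (m + 1) (MvPolynomial.X 0)
          - MvPolynomial.X 0 * traceImg q (m + 1) ((MvPolynomial.X 1) ^ q ^ (n - m)) := by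
  subst hq
  set R := MvPolynomial (Fin 2) (GaloisField p e)
  set x : R := MvPolynomial.X 0
  set y : R := MvPolynomial.X 1
  induction m generalizing n with
  | zero =>
    have hq0 : p ^ e ≠ 0 := pow_ne_zero _ (Fact.out (p := p.Prime)).ne_zero
    simp [SPoly, traceImg, zero_pow hq0, ← pow_mul, mul_comm]
  | succ m ih =>
    have hn1 : 1 ≤ n := by omega
    have key := ih (n - 1) (by omega)
    rw [show n - 1 - m = n - (m + 1) by omega] at key
    have hyy : (y ^ (p ^ e) ^ (n - (m + 1))) ^ ((p ^ e) ^ (m + 1) : ℕ)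
        = y ^ (p ^ e) ^ n := by
      rw [← pow_mul, ← pow_add, show n - (m + 1) + (m + 1) = n by omega]
    have h2 : traceImg (p ^ e) (m + 1 + 1) (y ^ (p ^ e) ^ (n - (m + 1)))
        = traceImg (p ^ e) (m + 1) (y ^ (p ^ e) ^ (n - (m + 1))) + y ^ (p ^ e) ^ n := by
      rw [traceImg, Finset.sum_range_succ, ← traceImg, hyy]
    rw [SPoly_succ, add_pow_char_pow, mul_pow, ← pow_mul, ← pow_succ,
      Nat.sub_add_cancel hn1, traceImg_pow_q p e, h2]
    linear_combination key
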